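/- Let α ∈ (0,1) and let h : (0,∞) → ℝ be defined by h(k) = (e^{4k} − 1) / (k [e^{4k} + 1 + 2 e^{2k} cos(2k tan(πα/4))]). Then h is uniformly bounded on (0,∞): there exists C > 0 such that 0 ≤ h(k) ≤ C for all k > 0. -/
import Mathlib


open Real

/-- The auxiliary function `h(k)` arising in the bound of the `L²` norm of the
frequency-domain Green function. -/
noncomputable def hAux (α k : ℝ) : ℝ :=
  (Real.exp (4 * k) - 1) /
    (k * (Real.exp (4 * k) + 1
      + 2 * Real.exp (2 * k) * Real.cos (2 * k * Real.tan (Real.pi * α / 4))))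

/-- For `α ∈ (0,1)`, the function `h` is uniformly bounded on `(0,∞)`:
there exists `C > 0` with `0 ≤ h(k) ≤ C` for all `k > 0`. -/
theorem hAux_uniformly_bounded (α : ℝ) (hα : α ∈ Set.Ioo (0:ℝ) 1) :
    ∃ C > 0, ∀ k : ℝ, 0 < k → 0 ≤ hAux α k ∧ hAux α k ≤ C := by
  obtain ⟨hα0, hα1⟩ := hα
  have hπ := Real.pi_pos
  set t := Real.tan (Real.pi * α / 4) with htdef
  have ht0 : 0 ≤ t :=
    Real.tan_nonneg_of_nonneg_of_le_pi_div_two (by positivity) (by nlinarith)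
  have ht1 : t ≤ 1 := by
    rw [htdef, ← Real.tan_pi_div_four]
    exact le_of_lt (Real.tan_lt_tan_of_nonneg_of_lt_pi_div_two (by positivity)
      (by nlinarith) (by nlinarith))
  clear_value t
  refine ⟨6, by norm_num, fun k hk => ?_⟩
  have hEpos : (0:ℝ) < Real.exp (2 * k) := Real.exp_pos _
  have hE4 : Real.exp (4 * k) = Real.exp (2 * k) * Real.exp (2 * k) := by
    rw [← Real.exp_add]; ring_nf
  have hE1 : 1 + 2 * k ≤ Real.exp (2 * k) := by
    have := Real.add_one_le_exp (2 * k); linarith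
  have hEk : Real.exp (2 * k) - 1 ≤ 2 * k * Real.exp (2 * k) := by
    have h1 : (-(2 * k)) + 1 ≤ Real.exp (-(2 * k)) := Real.add_one_le_exp _
    have h2 : Real.exp (-(2 * k)) * Real.exp (2 * k) = 1 := by
      rw [← Real.exp_add]; simp
    nlinarith [Real.exp_pos (2 * k)]
  have hcosm1 : -1 ≤ Real.cos (2 * k * t) := Real.neg_one_le_cos _
  set D := Real.exp (4 * k) + 1 + 2 * Real.exp (2 * k) * Real.cos (2 * k * t) with hDdef
  have hD1 : (Real.exp (2 * k) - 1) ^ 2 ≤ D := by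
    rw [hDdef, hE4]; nlinarith
  clear_value D
  have hDpos : 0 < D := lt_of_lt_of_le (by nlinarith) hD1
  have hkD : 0 < k * D := mul_pos hk hDpos
  have hnum : 0 ≤ Real.exp (4 * k) - 1 := by
    have : (1:ℝ) ≤ Real.exp (4 * k) := Real.one_le_exp (by linarith)
    linarith
  have hunfold : hAux α k = (Real.exp (4 * k) - 1) / (k * D) := by rw [hDdef, htdef]; rfl
  constructor
  · rw [hunfold]
    exact div_nonneg hnum hkD.le
  · rw [hunfold, div_le_iff₀ hkD]
    rcases le_or_gt k (1/2) with hhalf | hhalf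
    · -- small k: D ≥ (3/4)(E+1)^2
      have hcos2 : 1 - 2 * k ^ 2 ≤ Real.cos (2 * k * t) := by
        have h1 := Real.one_sub_sq_div_two_le_cos (x := 2 * k * t)
        have ht2 : t ^ 2 ≤ 1 := by nlinarith
        nlinarith [mul_le_mul_of_nonneg_left ht2 (sq_nonneg k)]
      have hD2 : (3/4) * (Real.exp (2 * k) + 1) ^ 2 ≤ D := by
        rw [hDdef, hE4]
        nlinarith [sq_nonneg (Real.exp (2 * k) - 1), sq_nonneg (Real.exp (2 * k) + 1),
          sq_nonneg k, hEpos]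
      rw [hE4]
      set E := Real.exp (2 * k) with hE
      clear_value E
      have hEp1 : (0:ℝ) ≤ E + 1 := by positivity
      have s1 : (E - 1) * (E + 1) ≤ 2 * k * E * (E + 1) :=
        mul_le_mul_of_nonneg_right hEk hEp1
      have s2 : 2 * k * E * (E + 1) ≤ 2 * k * ((E + 1) * (E + 1)) := by nlinarith
      have s3 : k * ((3/4) * (E + 1) ^ 2) ≤ k * D := mul_le_mul_of_nonneg_left hD2 hk.le
      have s4 : 0 ≤ k * ((E + 1) * (E + 1)) := by positivity
      clear hunfold hDdef htdef hD2 hcos2 hD1 hcosm1 hEk hE1 hE4 hnum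
      nlinarith [s1, s2, s3, s4, hk, sq_nonneg (E + 1)]
    · -- large k: D ≥ (E-1)^2 and E ≥ 2
      have hE2 : (2:ℝ) ≤ Real.exp (2 * k) := by linarith
      rw [hE4]
      set E := Real.exp (2 * k) with hE
      clear_value E
      have hEm1 : (0:ℝ) ≤ E - 1 := by linarith
      have u1 : E + 1 ≤ 3 * (E - 1) := by linarith
      have u2 : (E - 1) * (E + 1) ≤ (E - 1) * (3 * (E - 1)) :=
        mul_le_mul_of_nonneg_left u1 hEm1
      have u3 : 3 * ((E - 1) * (E - 1)) ≤ 6 * k * ((E - 1) * (E - 1)) := by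
        have h := mul_nonneg (show (0:ℝ) ≤ 6 * k - 3 by linarith)
          (mul_nonneg hEm1 hEm1)
        linarith only [h]
      have u4 : k * (E - 1) ^ 2 ≤ k * D := mul_le_mul_of_nonneg_left hD1 hk.le
      clear hunfold hDdef htdef hD1 hcosm1 hEk hE1 hE4 hnum
      linarith only [u2, u3, u4]
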